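/- For every simple graph G on a finite vertex set of size n with m edges, the number of triangles (3-cliques) of G plus the number of triangles of the complement of G equals C(n,3) − (n−2)·m + Σ_v C(d(v),2), where the sum runs over all vertices v and d(v) denotes the degree of v in G (the identity being understood in the integers). -/

import Mathlib

set_option linter.unusedSectionVars false

open Finset

section GoodmanAux

variable {V : Type*} [Fintype V] [DecidableEq V]

private lemma goodman_sum3 {M : Type*} [AddCommMonoid M] {a b c : V} (hab : a ≠ b)
    (hac : a ≠ c) (hbc : b ≠ c) (f : V → M) :
    ∑ x ∈ ({a, b, c} : Finset V), f x = f a + f b + f c := by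
  rw [show ({a, b, c} : Finset V) = insert a (insert b {c}) from rfl,
    Finset.sum_insert (by simp [hab, hac]), Finset.sum_insert (by simp [hbc]),
    Finset.sum_singleton, add_assoc]

private lemma goodman_ite_and_mul {p q : Prop} [Decidable p] [Decidable q] :
    (if p ∧ q then (1:ℤ) else 0) = (if p then 1 else 0) * (if q then 1 else 0) := by
  by_cases hp : p <;> by_cases hq : q <;> simp [hp, hq]

private lemma goodman_ite_not_one {p : Prop} [Decidable p] :
    (if ¬ p then (1:ℤ) else 0) = 1 - (if p then 1 else 0) := by
  by_cases hp : p <;> simp [hp]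

/-- Ordered pairs of adjacent vertices inside `S`. -/
private def adjCount (G : SimpleGraph V) [DecidableRel G.Adj] (S : Finset V) : ℕ :=
  ((S ×ˢ S).filter fun p => G.Adj p.1 p.2).card

/-- Ordered cherries (paths of length two, centred at the first coordinate) inside `S`. -/
private def cherCount (G : SimpleGraph V) [DecidableRel G.Adj] (S : Finset V) : ℕ :=
  ((S ×ˢ S ×ˢ S).filter fun q => q.2.1 ≠ q.2.2 ∧ G.Adj q.1 q.2.1 ∧ G.Adj q.1 q.2.2).card

private lemma goodman_count_sup (T : Finset V) (hT : T.card ≤ 3) :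
    (((univ : Finset V).powersetCard 3).filter fun S => T ⊆ S).card
      = (Fintype.card V - T.card).choose (3 - T.card) := by
  have h : (((univ : Finset V).powersetCard 3).filter fun S => T ⊆ S).card
      = (((univ : Finset V) \ T).powersetCard (3 - T.card)).card := by
    apply Finset.card_bij' (fun S _ => S \ T) (fun t _ => t ∪ T)
    · intro S hS
      simp only [mem_filter, Finset.mem_powersetCard_univ] at hS
      rw [Finset.mem_powersetCard]
      exact ⟨Finset.sdiff_subset_sdiff (subset_univ S) le_rfl,
        by rw [Finset.card_sdiff_of_subset hS.2, hS.1]⟩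
    · intro t ht
      rw [Finset.mem_powersetCard] at ht
      have hdisj : Disjoint t T := Finset.disjoint_of_subset_left ht.1 Finset.sdiff_disjoint
      simp only [mem_filter, Finset.mem_powersetCard_univ]
      constructor
      · rw [Finset.card_union_of_disjoint hdisj, ht.2]
        omega
      · exact Finset.subset_union_right
    · intro S hS
      simp only [mem_filter] at hS
      exact Finset.sdiff_union_of_subset hS.2
    · intro t ht
      rw [Finset.mem_powersetCard] at ht
      exact Finset.union_sdiff_cancel_right
        (Finset.disjoint_of_subset_left ht.1 Finset.sdiff_disjoint)
  rw [h, Finset.card_powersetCard, Finset.card_sdiff_of_subset (subset_univ T), Finset.card_univ]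

private lemma goodman_count_pair {x y : V} (hxy : x ≠ y) :
    ((((univ : Finset V).powersetCard 3).filter fun S => x ∈ S ∧ y ∈ S).card : ℤ)
      = (Fintype.card V : ℤ) - 2 := by
  have hc : ({x, y} : Finset V).card = 2 := by rw [Finset.card_pair hxy]
  have h := goodman_count_sup ({x, y} : Finset V) (by omega)
  have hfilter : (((univ : Finset V).powersetCard 3).filter fun S => ({x,y} : Finset V) ⊆ S)
      = ((univ : Finset V).powersetCard 3).filter fun S => x ∈ S ∧ y ∈ S := by
    apply Finset.filter_congr
    intro S _
    simp [Finset.insert_subset_iff]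
  rw [hfilter, hc] at h
  have hn : 2 ≤ Fintype.card V := by
    rw [← hc]; exact Finset.card_le_card (subset_univ _) |>.trans_eq Finset.card_univ
  norm_num at h
  rw [h]
  omega

private lemma goodman_count_triple {x y z : V} (hxy : x ≠ y) (hxz : x ≠ z) (hyz : y ≠ z) :
    ((((univ : Finset V).powersetCard 3).filter fun S => x ∈ S ∧ y ∈ S ∧ z ∈ S).card : ℤ)
      = 1 := by
  have hc : ({x, y, z} : Finset V).card = 3 := by
    rw [Finset.card_insert_of_notMem (by simp [hxy, hxz]), Finset.card_pair hyz]
  have h := goodman_count_sup ({x, y, z} : Finset V) (by omega)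
  have hfilter : (((univ : Finset V).powersetCard 3).filter fun S => ({x,y,z} : Finset V) ⊆ S)
      = ((univ : Finset V).powersetCard 3).filter fun S => x ∈ S ∧ y ∈ S ∧ z ∈ S := by
    apply Finset.filter_congr
    intro S _
    simp [Finset.insert_subset_iff]
  rw [hfilter] at h
  rw [h, hc]
  norm_num

private lemma goodman_pointwise (G : SimpleGraph V) [DecidableRel G.Adj] (S : Finset V)
    (hS : S.card = 3) :
    ((if S ∈ G.cliqueFinset 3 then (1:ℤ) else 0)
      + (if S ∈ Gᶜ.cliqueFinset 3 then (1:ℤ) else 0)) * 2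
      = 2 - (adjCount G S : ℤ) + (cherCount G S : ℤ) := by
  obtain ⟨a, b, c, hab, hac, hbc, rfl⟩ := Finset.card_eq_three.mp hS
  have c1 : G.Adj b a ↔ G.Adj a b := G.adj_comm b a
  have c2 : G.Adj c a ↔ G.Adj a c := G.adj_comm c a
  have c3 : G.Adj c b ↔ G.Adj b c := G.adj_comm c b
  have hA : (adjCount G ({a,b,c} : Finset V) : ℤ)
      = 2 * ((if G.Adj a b then (1:ℤ) else 0) + (if G.Adj a c then (1:ℤ) else 0)
          + (if G.Adj b c then (1:ℤ) else 0)) := by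
    rw [adjCount, ← Finset.sum_boole]
    simp only [Finset.sum_product, goodman_sum3 hab hac hbc]
    simp only [SimpleGraph.irrefl, c1, c2, c3, if_false]
    ring
  have hC : (cherCount G ({a,b,c} : Finset V) : ℤ)
      = 2 * ((if G.Adj a b then (1:ℤ) else 0) * (if G.Adj a c then (1:ℤ) else 0)
          + (if G.Adj a b then (1:ℤ) else 0) * (if G.Adj b c then (1:ℤ) else 0)
          + (if G.Adj a c then (1:ℤ) else 0) * (if G.Adj b c then (1:ℤ) else 0)) := by
    rw [cherCount, ← Finset.sum_boole]
    simp only [Finset.sum_product, goodman_sum3 hab hac hbc]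
    simp only [ne_eq, hab, hac, hbc, Ne.symm hab, Ne.symm hac, Ne.symm hbc,
      SimpleGraph.irrefl, c1, c2, c3, not_true, not_false_iff, false_and, and_false,
      true_and, and_true, if_false, if_true, goodman_ite_and_mul]
    ring
  have hT : (if ({a,b,c} : Finset V) ∈ G.cliqueFinset 3 then (1:ℤ) else 0)
      = (if G.Adj a b then (1:ℤ) else 0) * (if G.Adj a c then (1:ℤ) else 0)
        * (if G.Adj b c then (1:ℤ) else 0) := by
    simp only [SimpleGraph.mem_cliqueFinset_iff, SimpleGraph.is3Clique_triple_iff,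
      goodman_ite_and_mul, mul_assoc]
  have hT' : (if ({a,b,c} : Finset V) ∈ Gᶜ.cliqueFinset 3 then (1:ℤ) else 0)
      = (1 - (if G.Adj a b then (1:ℤ) else 0)) * (1 - (if G.Adj a c then (1:ℤ) else 0))
        * (1 - (if G.Adj b c then (1:ℤ) else 0)) := by
    simp only [SimpleGraph.mem_cliqueFinset_iff, SimpleGraph.is3Clique_triple_iff,
      SimpleGraph.compl_adj, ne_eq, hab, hac, hbc, not_false_iff, true_and,
      goodman_ite_and_mul, goodman_ite_not_one]
    ring
  rw [hA, hC, hT, hT']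
  ring

private lemma goodman_sum_adjCount (G : SimpleGraph V) [DecidableRel G.Adj] :
    ∑ S ∈ (univ : Finset V).powersetCard 3, (adjCount G S : ℤ)
      = ((Fintype.card V : ℤ) - 2) * (2 * (G.edgeFinset.card : ℤ)) := by
  have step1 : ∀ S ∈ (univ : Finset V).powersetCard 3, (adjCount G S : ℤ)
      = ∑ p ∈ (univ : Finset V) ×ˢ (univ : Finset V),
          if G.Adj p.1 p.2 ∧ p.1 ∈ S ∧ p.2 ∈ S then (1:ℤ) else 0 := by
    intro S _
    rw [Finset.sum_boole, adjCount]
    congr 1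
    apply Finset.card_nbij' id id <;> intro p hp <;>
      simp only [Finset.mem_coe, mem_filter, Finset.mem_product, mem_univ, true_and, and_true, id] at * <;>
      tauto
  rw [Finset.sum_congr rfl step1, Finset.sum_comm]
  have step2 : ∀ p ∈ (univ : Finset V) ×ˢ (univ : Finset V),
      (∑ S ∈ (univ : Finset V).powersetCard 3,
        if G.Adj p.1 p.2 ∧ p.1 ∈ S ∧ p.2 ∈ S then (1:ℤ) else 0)
      = if G.Adj p.1 p.2 then ((Fintype.card V : ℤ) - 2) else 0 := by
    intro p _
    by_cases hp : G.Adj p.1 p.2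
    · simp only [hp, true_and, if_true]
      rw [Finset.sum_boole, goodman_count_pair hp.ne]
    · simp [hp]
  rw [Finset.sum_congr rfl step2]
  have step3 : (∑ p ∈ (univ : Finset V) ×ˢ (univ : Finset V),
      if G.Adj p.1 p.2 then ((Fintype.card V : ℤ) - 2) else 0)
      = ((Fintype.card V : ℤ) - 2) * ∑ p ∈ (univ : Finset V) ×ˢ (univ : Finset V),
          (if G.Adj p.1 p.2 then (1:ℤ) else 0) := by
    rw [Finset.mul_sum]
    exact Finset.sum_congr rfl fun p _ => by split_ifs <;> ring
  rw [step3, Finset.sum_boole]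
  congr 1
  have : (((univ : Finset V) ×ˢ (univ : Finset V)).filter (fun p => G.Adj p.1 p.2)).card
      = ∑ v : V, G.degree v := by
    rw [Finset.card_filter, Finset.sum_product]
    refine Finset.sum_congr rfl fun x _ => ?_
    rw [← Finset.card_filter, ← SimpleGraph.neighborFinset_eq_filter]
    rfl
  rw [this, SimpleGraph.sum_degrees_eq_twice_card_edges]
  push_cast
  ring

private lemma goodman_sum_cherCount (G : SimpleGraph V) [DecidableRel G.Adj] :
    ∑ S ∈ (univ : Finset V).powersetCard 3, (cherCount G S : ℤ)
      = ∑ v : V, (G.degree v : ℤ) * ((G.degree v : ℤ) - 1) := by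
  have step1 : ∀ S ∈ (univ : Finset V).powersetCard 3, (cherCount G S : ℤ)
      = ∑ q ∈ (univ : Finset V) ×ˢ (univ : Finset V) ×ˢ (univ : Finset V),
          if (q.2.1 ≠ q.2.2 ∧ G.Adj q.1 q.2.1 ∧ G.Adj q.1 q.2.2)
              ∧ q.1 ∈ S ∧ q.2.1 ∈ S ∧ q.2.2 ∈ S then (1:ℤ) else 0 := by
    intro S _
    rw [Finset.sum_boole, cherCount]
    congr 1
    apply Finset.card_nbij' id id <;> intro p hp <;>
      simp only [Finset.mem_coe, mem_filter, Finset.mem_product, mem_univ, true_and, and_true, id] at * <;>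
      tauto
  rw [Finset.sum_congr rfl step1, Finset.sum_comm]
  have step2 : ∀ q ∈ (univ : Finset V) ×ˢ (univ : Finset V) ×ˢ (univ : Finset V),
      (∑ S ∈ (univ : Finset V).powersetCard 3,
        if (q.2.1 ≠ q.2.2 ∧ G.Adj q.1 q.2.1 ∧ G.Adj q.1 q.2.2)
            ∧ q.1 ∈ S ∧ q.2.1 ∈ S ∧ q.2.2 ∈ S then (1:ℤ) else 0)
      = if q.2.1 ≠ q.2.2 ∧ G.Adj q.1 q.2.1 ∧ G.Adj q.1 q.2.2 then (1:ℤ) else 0 := by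
    intro q _
    by_cases hq : q.2.1 ≠ q.2.2 ∧ G.Adj q.1 q.2.1 ∧ G.Adj q.1 q.2.2
    · obtain ⟨h1, h2, h3⟩ := hq
      simp only [ne_eq, h1, h2, h3, not_false_iff, true_and, and_true, if_true]
      rw [Finset.sum_boole, goodman_count_triple h2.ne h3.ne h1]
    · simp [hq]
  rw [Finset.sum_congr rfl step2, Finset.sum_boole]
  have hset : (((univ : Finset V) ×ˢ (univ : Finset V) ×ˢ (univ : Finset V)).filter
      (fun q => q.2.1 ≠ q.2.2 ∧ G.Adj q.1 q.2.1 ∧ G.Adj q.1 q.2.2)).card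
      = ∑ v : V, ((G.neighborFinset v).offDiag).card := by
    rw [Finset.card_filter, Finset.sum_product]
    refine Finset.sum_congr rfl fun x _ => ?_
    rw [← Finset.card_filter]
    congr 1
    ext p
    simp [Finset.mem_offDiag, Finset.mem_product, SimpleGraph.mem_neighborFinset]
    tauto
  rw [hset]
  push_cast
  refine Finset.sum_congr rfl fun v _ => ?_
  rw [Finset.offDiag_card]
  have hd : (G.neighborFinset v).card ≤ (G.neighborFinset v).card * (G.neighborFinset v).card := by
    rcases Nat.eq_zero_or_pos (G.neighborFinset v).card with h | h
    · simp [h]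
    · exact Nat.le_mul_of_pos_left _ h
  rw [Nat.cast_sub hd, SimpleGraph.card_neighborFinset_eq_degree]
  push_cast
  ring

private lemma goodman_choose_two (d : ℕ) :
    ((d.choose 2 : ℕ) : ℤ) * 2 = (d : ℤ) * ((d : ℤ) - 1) := by
  cases d with
  | zero => simp
  | succ k =>
    have h2 : 2 ∣ (k + 1) * k := by
      have h := (Nat.even_mul_succ_self k).two_dvd
      rwa [mul_comm] at h
    have h3 : (k + 1) * k / 2 * 2 = (k + 1) * k := Nat.div_mul_cancel h2
    rw [Nat.choose_two_right, Nat.succ_sub_one]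
    calc (((k + 1) * k / 2 : ℕ) : ℤ) * 2 = (((k + 1) * k / 2 * 2 : ℕ) : ℤ) := by push_cast; ring
      _ = (((k + 1) * k : ℕ) : ℤ) := by rw [h3]
      _ = ((k : ℤ) + 1) * (((k : ℤ) + 1) - 1) := by push_cast; ring
      _ = ((k + 1 : ℕ) : ℤ) * (((k + 1 : ℕ) : ℤ) - 1) := by push_cast; ring

private lemma goodman_card_as_sum (G : SimpleGraph V) [DecidableRel G.Adj] :
    ((G.cliqueFinset 3).card : ℤ)
      = ∑ S ∈ (univ : Finset V).powersetCard 3,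
          (if S ∈ G.cliqueFinset 3 then (1:ℤ) else 0) := by
  have hsub : G.cliqueFinset 3 ⊆ (univ : Finset V).powersetCard 3 := by
    intro S hS
    rw [Finset.mem_powersetCard_univ]
    exact (SimpleGraph.mem_cliqueFinset_iff.mp hS).2
  rw [Finset.sum_boole, Finset.filter_mem_eq_inter, Finset.inter_eq_right.mpr hsub]

end GoodmanAux

/-- Goodman's formula: for a simple graph `G` on `n` vertices with `m` edges,
`t(G) + t(Gᶜ) = C(n,3) - (n-2)·m + ∑_v C(d(v),2)`, as an identity in `ℤ`. -/
theorem goodman_formula {V : Type*} [Fintype V] [DecidableEq V]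
    (G : SimpleGraph V) [DecidableRel G.Adj] :
    ((G.cliqueFinset 3).card : ℤ) + ((Gᶜ.cliqueFinset 3).card : ℤ) =
      ((Fintype.card V).choose 3 : ℤ)
        - ((Fintype.card V : ℤ) - 2) * (G.edgeFinset.card : ℤ)
        + ∑ v : V, ((G.degree v).choose 2 : ℤ) := by
  have key : (((G.cliqueFinset 3).card : ℤ) + ((Gᶜ.cliqueFinset 3).card : ℤ)) * 2
      = ∑ S ∈ (univ : Finset V).powersetCard 3,
          (2 - (adjCount G S : ℤ) + (cherCount G S : ℤ)) := by
    rw [goodman_card_as_sum G, goodman_card_as_sum Gᶜ, ← Finset.sum_add_distrib,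
      Finset.sum_mul]
    refine Finset.sum_congr rfl fun S hS => ?_
    exact goodman_pointwise G S (Finset.mem_powersetCard_univ.mp hS)
  rw [Finset.sum_add_distrib, Finset.sum_sub_distrib, Finset.sum_const,
    Finset.card_powersetCard, Finset.card_univ, goodman_sum_adjCount,
    goodman_sum_cherCount] at key
  have hchoose : ∑ v : V, ((G.degree v).choose 2 : ℤ) * 2
      = ∑ v : V, (G.degree v : ℤ) * ((G.degree v : ℤ) - 1) :=
    Finset.sum_congr rfl fun v _ => goodman_choose_two (G.degree v)
  rw [← hchoose, ← Finset.sum_mul] at key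
  simp only [nsmul_eq_mul] at key
  linarith
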